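/- Let (w*, b*, ξ*) be optimal for the primal L1-regularized L2-loss SVM min (1/2)Σᵢξᵢ² + λ‖w‖₁ subject to yᵢ(wᵀxᵢ + b) ≥ 1 - ξᵢ, ξᵢ ≥ 0, and let α* be the corresponding optimal dual variables. Then ξᵢ* = αᵢ* = max(0, 1 - yᵢ((w*)ᵀxᵢ + b*)) for all i, and for every feature j, if wⱼ* ≠ 0 then (α*)ᵀ(Y fⱼ) = sign(wⱼ*)·λ, while if wⱼ* = 0 then |(α*)ᵀ(Y fⱼ)| ≤ λ, where fⱼ ∈ ℝⁿ is the j-th feature (row of the data matrix) and Y = diag(y). -/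
import Mathlib

/-- Epsilon argument: if `A ≤ B + s*C` for all small positive `s`, then `A ≤ B`. -/
lemma aux_eps_18 (A B C δ : ℝ) (hC : 0 ≤ C) (hδ : 0 < δ)
    (h : ∀ s : ℝ, 0 < s → s < δ → A ≤ B + s * C) : A ≤ B := by
  refine le_of_forall_pos_le_add fun ε hε => ?_
  set s := min (δ/2) (ε/(C+1)) with hs
  have hspos : 0 < s := lt_min (by linarith) (by positivity)
  have hslt : s < δ := lt_of_le_of_lt (min_le_left _ _) (by linarith)
  have h1 := h s hspos hslt
  have h2 : s ≤ ε/(C+1) := min_le_right _ _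
  have h3 : s * (C+1) ≤ ε := by
    rw [← le_div_iff₀ (by linarith : (0:ℝ) < C+1)]; exact h2
  nlinarith

/-- KKT relations for the primal L1-regularized L2-loss SVM: if `(w*, b*, ξ*)`
is optimal for `min (1/2)Σᵢξᵢ² + λ‖w‖₁` s.t. `yᵢ(wᵀxᵢ + b) ≥ 1 - ξᵢ, ξᵢ ≥ 0`,
then `ξᵢ* = αᵢ* = max(0, 1 - yᵢ((w*)ᵀxᵢ + b*))`, and for each feature `j`:
if `wⱼ* ≠ 0` then `(α*)ᵀ(Y fⱼ) = sign(wⱼ*)·λ`, while if `wⱼ* = 0` then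
`|(α*)ᵀ(Y fⱼ)| ≤ λ`.  Here `X j i` is entry `i` of the `j`-th feature `fⱼ`,
so that `(w*)ᵀxᵢ = Σⱼ wⱼ* X j i` and `(α*)ᵀ(Y fⱼ) = Σᵢ αᵢ* yᵢ X j i`. -/
theorem stmt_18 {m N : ℕ} (X : Fin m → Fin N → ℝ) (y : Fin N → ℝ)
    (hy : ∀ i, y i = 1 ∨ y i = -1) (lam : ℝ) (hlam : 0 < lam)
    (ws : Fin m → ℝ) (bs : ℝ) (ξs : Fin N → ℝ)
    (hfeas : ∀ i, 1 - ξs i ≤ y i * ((∑ j, ws j * X j i) + bs) ∧ 0 ≤ ξs i)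
    (hopt : ∀ (w : Fin m → ℝ) (b : ℝ) (ξ : Fin N → ℝ),
      (∀ i, 1 - ξ i ≤ y i * ((∑ j, w j * X j i) + b) ∧ 0 ≤ ξ i) →
      (1/2) * (∑ i, (ξs i)^2) + lam * ∑ j, |ws j| ≤
        (1/2) * (∑ i, (ξ i)^2) + lam * ∑ j, |w j|)
    (αs : Fin N → ℝ)
    (hα : ∀ i, αs i = ξs i) :
    (∀ i, ξs i = max 0 (1 - y i * ((∑ j, ws j * X j i) + bs))) ∧
    ∀ j : Fin m,
      (ws j ≠ 0 → ∑ i, αs i * y i * X j i = Real.sign (ws j) * lam) ∧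
      (ws j = 0 → |∑ i, αs i * y i * X j i| ≤ lam) := by
  -- margin
  set M : Fin N → ℝ := fun i => y i * ((∑ j, ws j * X j i) + bs) with hM
  -- Part 1
  have part1 : ∀ i, ξs i = max 0 (1 - M i) := by
    set ξ' : Fin N → ℝ := fun i => max 0 (1 - M i) with hξ'
    have hfeas' : ∀ i, 1 - ξ' i ≤ M i ∧ 0 ≤ ξ' i := by
      intro i
      constructor
      · have := le_max_right (0:ℝ) (1 - M i); simp only [hξ']; linarith
      · exact le_max_left _ _
    have hle : ∀ i, ξ' i ≤ ξs i := fun i =>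
      max_le (hfeas i).2 (by
        have h : 1 - ξs i ≤ M i := (hfeas i).1
        linarith)
    have hO := hopt ws bs ξ' hfeas'
    have hsum1 : ∑ i, (ξs i)^2 ≤ ∑ i, (ξ' i)^2 := by linarith
    have hsum2 : ∑ i, (ξ' i)^2 ≤ ∑ i, (ξs i)^2 :=
      Finset.sum_le_sum fun i _ => pow_le_pow_left₀ (le_max_left _ _) (hle i) 2
    have hzero : ∀ i ∈ Finset.univ, (ξs i)^2 - (ξ' i)^2 = 0 := by
      rw [← Finset.sum_eq_zero_iff_of_nonneg]
      · rw [Finset.sum_sub_distrib]; linarith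
      · intro i _
        have := pow_le_pow_left₀ (le_max_left (0:ℝ) (1 - M i)) (hle i) 2
        simp only [hξ'] at this ⊢; linarith
    intro i
    have h1 := hzero i (Finset.mem_univ i)
    have h2 := hle i
    have h3 : (0:ℝ) ≤ ξ' i := le_max_left _ _
    have : ξs i = ξ' i := by nlinarith
    exact this
  refine ⟨part1, fun j => ?_⟩
  -- Part 2 setup
  set g : Fin N → ℝ := fun i => y i * X j i with hg
  set S : ℝ := ∑ i, αs i * y i * X j i with hS
  set G : ℝ := ∑ i, (g i)^2 with hG
  have hGnn : 0 ≤ G := Finset.sum_nonneg fun i _ => sq_nonneg _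
  have hSg : ∑ i, ξs i * g i = S := by
    rw [hS]; apply Finset.sum_congr rfl
    intro i _; rw [hα i, hg]; ring
  -- The key variational inequality
  have hstar : ∀ t : ℝ, t * S ≤ lam * (|ws j + t| - |ws j|) + t^2/2 * G := by
    intro t
    set w' : Fin m → ℝ := Function.update ws j (ws j + t) with hw'
    set ξ' : Fin N → ℝ := fun i => max 0 (1 - M i - t * g i) with hξ'
    have hmargin : ∀ i, ∑ k, w' k * X k i = (∑ k, ws k * X k i) + t * X j i := by
      intro i
      have hd : ∑ k, (w' k * X k i - ws k * X k i) = t * X j i := by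
        rw [Finset.sum_eq_single j]
        · simp [hw', Function.update_self]; ring
        · intro k _ hk; simp [hw', Function.update_of_ne hk]
        · simp
      rw [Finset.sum_sub_distrib] at hd; linarith
    have habsw : ∑ k, |w' k| = (∑ k, |ws k|) + (|ws j + t| - |ws j|) := by
      have hd : ∑ k, (|w' k| - |ws k|) = |ws j + t| - |ws j| := by
        rw [Finset.sum_eq_single j]
        · simp [hw', Function.update_self]
        · intro k _ hk; simp [hw', Function.update_of_ne hk]
        · simp
      rw [Finset.sum_sub_distrib] at hd; linarith
    have hfeas2 : ∀ i, 1 - ξ' i ≤ y i * ((∑ k, w' k * X k i) + bs) ∧ 0 ≤ ξ' i := by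
      intro i
      constructor
      · rw [hmargin i]
        have h1 : y i * ((∑ k, ws k * X k i) + t * X j i + bs)
            = M i + t * g i := by rw [hM, hg]; ring
        rw [h1]
        have := le_max_right (0:ℝ) (1 - M i - t * g i)
        simp only [hξ']; linarith
      · exact le_max_left _ _
    have hO := hopt w' bs ξ' hfeas2
    rw [habsw] at hO
    -- pointwise bound on the new losses
    have hpt : ∀ i, (ξ' i)^2 ≤ (ξs i - t * g i)^2 := by
      intro i
      have hξs : ξs i = max 0 (1 - M i) := part1 i
      rcases le_or_gt (1 - M i - t * g i) 0 with h | h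
      · have : ξ' i = 0 := max_eq_left h
        rw [this]; simpa using sq_nonneg (ξs i - t * g i)
      · have h0 : ξ' i = 1 - M i - t * g i := max_eq_right h.le
        have h1 : 1 - M i ≤ ξs i := by rw [hξs]; exact le_max_right _ _
        rw [h0]
        apply pow_le_pow_left₀ h.le (by linarith) 2
    have hsum2 : ∑ i, (ξ' i)^2 ≤ ∑ i, (ξs i - t * g i)^2 :=
      Finset.sum_le_sum fun i _ => hpt i
    have hexp : ∑ i, (ξs i - t * g i)^2
        = (∑ i, (ξs i)^2) - 2*t*S + t^2 * G := by
      have h1 : ∀ i ∈ Finset.univ, (ξs i - t * g i)^2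
          = (ξs i)^2 - 2*t*(ξs i * g i) + t^2 * (g i)^2 := by
        intro i _; ring
      rw [Finset.sum_congr rfl h1]
      rw [Finset.sum_add_distrib, Finset.sum_sub_distrib, ← Finset.mul_sum,
        ← Finset.mul_sum, hSg, hG]
    rw [hexp] at hsum2
    have hdist : lam * ((∑ k, |ws k|) + (|ws j + t| - |ws j|))
        = lam * (∑ k, |ws k|) + lam * (|ws j + t| - |ws j|) := by ring
    rw [hdist] at hO
    linarith
  -- |S| ≤ lam
  have hSle : S ≤ lam := by
    apply aux_eps_18 S lam (G/2) 1 (by linarith) one_pos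
    intro s hs _
    have h1 := hstar s
    have h2 : |ws j + s| - |ws j| ≤ s := by
      have := abs_add_le (ws j) s
      rw [abs_of_pos hs] at this; linarith
    nlinarith [hlam.le]
  have hSge : -S ≤ lam := by
    apply aux_eps_18 (-S) lam (G/2) 1 (by linarith) one_pos
    intro s hs _
    have h1 := hstar (-s)
    have h2 : |ws j + -s| - |ws j| ≤ s := by
      have := abs_add_le (ws j) (-s)
      rw [abs_neg, abs_of_pos hs] at this; linarith
    nlinarith [hlam.le]
  constructor
  · intro hne
    rcases hne.lt_or_gt with hneg | hpos
    · -- ws j < 0 : S = -lam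
      have hkey : S ≤ -lam := by
        apply aux_eps_18 S (-lam) (G/2) (-(ws j)) (by linarith) (by linarith)
        intro s hs hslt
        have h1 := hstar s
        have h2 : |ws j + s| = -(ws j + s) := abs_of_neg (by linarith)
        have h3 : |ws j| = -(ws j) := abs_of_neg hneg
        rw [h2, h3] at h1
        nlinarith
      rw [Real.sign_of_neg hneg]
      linarith
    · -- ws j > 0 : S = lam
      have hkey : lam ≤ S := by
        apply aux_eps_18 lam S (G/2) (ws j) (by linarith) hpos
        intro s hs hslt
        have h1 := hstar (-s)
        have h2 : |ws j + -s| = ws j - s := by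
          rw [abs_of_pos (by linarith)]; ring
        have h3 : |ws j| = ws j := abs_of_pos hpos
        rw [h2, h3] at h1
        nlinarith
      rw [Real.sign_of_pos hpos]
      linarith
  · intro _
    exact abs_le.mpr ⟨by linarith, hSle⟩
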